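/- Let H be a real or complex Hilbert space, X ⊆ H a bounded set, and ξ ∈ H. Then ξ belongs to the norm closure of the convex hull of X if and only if for every η ∈ H there exists ζ ∈ X such that ‖ξ - ζ‖ ≤ ‖η - ζ‖. -/

import Mathlib

theorem stmt_2 {H : Type*} [NormedAddCommGroup H] [InnerProductSpace ℝ H] [CompleteSpace H]
    (X : Set H) (hX : Bornology.IsBounded X) (ξ : H) :
    ξ ∈ closure (convexHull ℝ X) ↔ ∀ η : H, ∃ ζ ∈ X, ‖ξ - ζ‖ ≤ ‖η - ζ‖ := by
  constructor
  · intro hξ η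
    have hXne : X.Nonempty := by
      have h1 : (convexHull ℝ X).Nonempty := closure_nonempty_iff.mp ⟨ξ, hξ⟩
      rwa [convexHull_nonempty_iff] at h1
    by_cases hηξ : η = ξ
    · obtain ⟨ζ, hζ⟩ := hXne
      exact ⟨ζ, hζ, by rw [hηξ]⟩
    · by_contra hc
      push_neg at hc
      set f := innerSL ℝ (ξ - η) with hf
      set c : ℝ := (‖ξ‖ ^ 2 - ‖η‖ ^ 2) / 2 with hcdef
      have hsub : X ⊆ {z | f z < c} := by
        intro ζ hζ
        have h1 : ‖η - ζ‖ < ‖ξ - ζ‖ := hc ζ hζ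
        have h2 : ‖η - ζ‖ ^ 2 < ‖ξ - ζ‖ ^ 2 := by
          have := norm_nonneg (η - ζ)
          nlinarith
        have e1 : ‖η - ζ‖ ^ 2 = ‖η‖ ^ 2 - 2 * inner ℝ η ζ + ‖ζ‖ ^ 2 :=
          @norm_sub_sq_real H _ _ η ζ
        have e2 : ‖ξ - ζ‖ ^ 2 = ‖ξ‖ ^ 2 - 2 * inner ℝ ξ ζ + ‖ζ‖ ^ 2 :=
          @norm_sub_sq_real H _ _ ξ ζ
        have e3 : f ζ = inner ℝ ξ ζ - inner ℝ η ζ := by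
          simp [hf, inner_sub_left]
        simp only [Set.mem_setOf_eq]
        rw [e3, hcdef]
        linarith
      have hconv : Convex ℝ {z | f z < c} :=
        convex_halfSpace_lt f.toLinearMap.isLinear c
      have hclosed : IsClosed {z | f z ≤ c} := isClosed_le f.continuous continuous_const
      have hsub2 : closure (convexHull ℝ X) ⊆ {z | f z ≤ c} :=
        closure_minimal
          (Set.Subset.trans (convexHull_min hsub hconv) (fun z hz => le_of_lt (Set.mem_setOf_eq ▸ hz))) hclosed
      have hfξ : f ξ ≤ c := hsub2 hξ
      have e4 : f ξ = inner ℝ ξ ξ - inner ℝ η ξ := by simp [hf, inner_sub_left]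
      have e5 : ‖ξ - η‖ ^ 2 = ‖ξ‖ ^ 2 - 2 * inner ℝ ξ η + ‖η‖ ^ 2 :=
        @norm_sub_sq_real H _ _ ξ η
      have e6 : (inner ℝ ξ ξ : ℝ) = ‖ξ‖ ^ 2 := real_inner_self_eq_norm_sq ξ
      have e7 : (inner ℝ η ξ : ℝ) = inner ℝ ξ η := by rw [real_inner_comm]
      have hpos : 0 < ‖ξ - η‖ := by
        rw [norm_pos_iff, sub_ne_zero]
        exact fun e => hηξ e.symm
      nlinarith
  · intro h
    by_contra hξ
    have hXne : X.Nonempty := by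
      obtain ⟨ζ, hζ, _⟩ := h 0
      exact ⟨ζ, hζ⟩
    set K := closure (convexHull ℝ X) with hK
    have hKconv : Convex ℝ K := (convex_convexHull ℝ X).closure
    have hKne : K.Nonempty := by
      rw [hK, closure_nonempty_iff, convexHull_nonempty_iff]
      exact hXne
    have hKcomp : IsComplete K := isClosed_closure.isComplete
    obtain ⟨p, hpK, hp⟩ := exists_norm_eq_iInf_of_complete_convex hKne hKcomp hKconv ξ
    rw [norm_eq_iInf_iff_real_inner_le_zero hKconv hpK] at hp
    obtain ⟨ζ, hζX, hle⟩ := h p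
    have hζK : ζ ∈ K := subset_closure (subset_convexHull ℝ X hζX)
    have h1 : (inner ℝ (ξ - p) (ζ - p) : ℝ) ≤ 0 := hp ζ hζK
    have hξp : ξ ≠ p := fun e => hξ (e ▸ hpK)
    have hd : 0 < ‖ξ - p‖ := by rw [norm_pos_iff, sub_ne_zero]; exact hξp
    have e1 : ‖ξ - ζ‖ ^ 2 = ‖ξ - p‖ ^ 2 - 2 * inner ℝ (ξ - p) (ζ - p) + ‖ζ - p‖ ^ 2 := by
      rw [show ξ - ζ = (ξ - p) - (ζ - p) by abel]
      exact @norm_sub_sq_real H _ _ (ξ - p) (ζ - p)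
    have hle2 : ‖ξ - ζ‖ ^ 2 ≤ ‖p - ζ‖ ^ 2 := by
      have := norm_nonneg (ξ - ζ)
      nlinarith
    have e2 : ‖p - ζ‖ = ‖ζ - p‖ := norm_sub_rev p ζ
    rw [e2] at hle2
    nlinarith
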